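/- Let ⟪-,-⟫ be a double bracket on A associated with a swap-commuting A-bimodule structure on A⊗A, assume there exists an A-bimodule structure ·₃ on A⊗A⊗A such that the double Jacobiator satisfies ⟪a,b,c₁c₂⟫ = c₁ ·₃ ⟪a,b,c₂⟫ + ⟪a,b,c₁⟫ ·₃ c₂ for all a,b,c₁,c₂ ∈ A, and let S = {a_j : j ∈ J} generate A as a k-algebra. If ⟪a_i,a_j⟫ = λ_{ij} · 1⊗1 with λ_{ij} ∈ k and λ_{ij} = -λ_{ji} for all i,j ∈ J, then ⟪-,-⟫ is a double Poisson bracket. -/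

import Mathlib

open scoped TensorProduct

noncomputable section

/-- A (`k`-linear) `A`-bimodule-type structure on a `k`-module `M`,
given by a three-slot action `a · d · b`. -/
structure BimodOn (k A M : Type*) [CommSemiring k] [Ring A] [Algebra k A]
    [AddCommMonoid M] [Module k M] where
  act : A → M → A → M
  add_left : ∀ (a a' : A) (d : M) (b : A), act (a + a') d b = act a d b + act a' d b
  add_mid : ∀ (a : A) (d d' : M) (b : A), act a (d + d') b = act a d b + act a d' b
  add_right : ∀ (a : A) (d : M) (b b' : A), act a d (b + b') = act a d b + act a d b'
  smul_left : ∀ (c : k) (a : A) (d : M) (b : A), act (c • a) d b = c • act a d b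
  smul_mid : ∀ (c : k) (a : A) (d : M) (b : A), act a (c • d) b = c • act a d b
  smul_right : ∀ (c : k) (a : A) (d : M) (b : A), act a d (c • b) = c • act a d b
  act_one_one : ∀ d : M, act 1 d 1 = d
  act_mul : ∀ (a a' : A) (d : M) (b b' : A), act a (act a' d b') b = act (a * a') d (b' * b)

/-- An `A`-bimodule structure on `A ⊗[k] A`. -/
abbrev BimodStr (k A : Type*) [CommSemiring k] [Ring A] [Algebra k A] :=
  BimodOn k A (A ⊗[k] A)

section Defs

variable (k A : Type*) [CommSemiring k] [Ring A] [Algebra k A]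

/-- The swap automorphism `°` of `A ⊗[k] A`, `a ⊗ b ↦ b ⊗ a`. -/
def swapT : A ⊗[k] A →ₗ[k] A ⊗[k] A := (TensorProduct.comm k A A).toLinearMap

variable {k A}

namespace BimodOn

/-- The swap bimodule structure `a * d * b = (a · d° · b)°` associated with a
bimodule structure on `A ⊗[k] A`. -/
def star (S : BimodStr k A) (a : A) (d : A ⊗[k] A) (b : A) : A ⊗[k] A :=
  swapT k A (S.act a (swapT k A d) b)

/-- A bimodule structure on `A ⊗[k] A` is swap-commuting if it commutes with its
swap bimodule structure. -/
def SwapCommuting (S : BimodStr k A) : Prop :=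
  ∀ (a₁ a₂ b₁ b₂ : A) (d : A ⊗[k] A),
    S.act a₁ (S.star a₂ d b₂) b₁ = S.star a₂ (S.act a₁ d b₁) b₂

end BimodOn

end Defs

/-- A double bracket on `A` associated with a bimodule structure `S` on `A ⊗[k] A`
(with swap bimodule structure `S.star`). -/
structure DoubleBracket {k A : Type*} [CommSemiring k] [Ring A] [Algebra k A]
    (S : BimodStr k A) where
  br : A →ₗ[k] A →ₗ[k] A ⊗[k] A
  antisymm : ∀ a b : A, br a b = - swapT k A (br b a)
  leibniz_right : ∀ a b c : A, br a (b * c) = S.act b (br a c) 1 + S.act 1 (br a b) c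
  leibniz_left : ∀ a b c : A, br (b * c) a = S.star b (br c a) 1 + S.star 1 (br b a) c

section Taus

variable (k A : Type*) [CommSemiring k] [Ring A] [Algebra k A]

/-- `τ_{(123)}` on `A^{⊗3}`: `a ⊗ b ⊗ c ↦ c ⊗ a ⊗ b`. -/
def tau123 : (A ⊗[k] A) ⊗[k] A →ₗ[k] (A ⊗[k] A) ⊗[k] A :=
  ((TensorProduct.comm k (A ⊗[k] A) A).trans (TensorProduct.assoc k A A A).symm).toLinearMap

/-- `τ_{(132)}` on `A^{⊗3}`: `a ⊗ b ⊗ c ↦ b ⊗ c ⊗ a`. -/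
def tau132 : (A ⊗[k] A) ⊗[k] A →ₗ[k] (A ⊗[k] A) ⊗[k] A :=
  ((TensorProduct.assoc k A A A).trans (TensorProduct.comm k A (A ⊗[k] A))).toLinearMap

/-- `τ_{(12)}` on `A^{⊗3}`: `a ⊗ b ⊗ c ↦ b ⊗ a ⊗ c`. -/
def tau12 : (A ⊗[k] A) ⊗[k] A →ₗ[k] (A ⊗[k] A) ⊗[k] A :=
  (TensorProduct.congr (TensorProduct.comm k A A) (LinearEquiv.refl k A)).toLinearMap

variable {k A}

/-- `⟪a, -⟫_L : A ⊗ A → A ⊗ A ⊗ A`, `b₁ ⊗ b₂ ↦ ⟪a, b₁⟫ ⊗ b₂`. -/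
def trL (br : A →ₗ[k] A →ₗ[k] A ⊗[k] A) (a : A) :
    A ⊗[k] A →ₗ[k] (A ⊗[k] A) ⊗[k] A :=
  TensorProduct.map (br a) LinearMap.id

/-- The double Jacobiator of a bilinear operation `A × A → A ⊗ A`:
`⟪a,b,c⟫ = ⟪a,⟪b,c⟫⟫_L + τ_{(123)} ⟪b,⟪c,a⟫⟫_L + τ_{(132)} ⟪c,⟪a,b⟫⟫_L`. -/
def jac (br : A →ₗ[k] A →ₗ[k] A ⊗[k] A) (a b c : A) : (A ⊗[k] A) ⊗[k] A :=
  trL br a (br b c) + tau123 k A (trL br b (br c a)) + tau132 k A (trL br c (br a b))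

end Taus

end


section Aux

variable {k A : Type*} [Field k] [Ring A] [Algebra k A]

lemma BimodOn.act_zero' {M : Type*} [AddCommGroup M] [Module k M]
    (S3 : BimodOn k A M) (a b : A) : S3.act a (0 : M) b = 0 := by
  have := S3.smul_mid 0 a 0 b
  simpa using this

/-- Generic vanishing lemma: a map vanishing on generators, additive, homogeneous, and
satisfying a Leibniz rule with respect to some bimodule structure, vanishes everywhere. -/
lemma vanishing_ind {M : Type*} [AddCommGroup M] [Module k M]
    (S3 : BimodOn k A M) (F : A → M)
    (Fadd : ∀ x y, F (x + y) = F x + F y)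
    (Fsmul : ∀ (r : k) (x : A), F (r • x) = r • F x)
    (Fmul : ∀ x y, F (x * y) = S3.act x (F y) 1 + S3.act 1 (F x) y)
    {J : Type*} (gen : J → A) (hgen : Algebra.adjoin k (Set.range gen) = ⊤)
    (h0 : ∀ j, F (gen j) = 0) : ∀ a, F a = 0 := by
  have hF1 : F 1 = 0 := by
    have h := Fmul 1 1
    rw [one_mul, S3.act_one_one] at h
    exact (right_eq_add.mp h)
  intro a
  have ha : a ∈ Algebra.adjoin k (Set.range gen) := by rw [hgen]; trivial
  induction ha using Algebra.adjoin_induction with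
  | mem x hx => obtain ⟨j, rfl⟩ := hx; exact h0 j
  | algebraMap r =>
      rw [Algebra.algebraMap_eq_smul_one, Fsmul, hF1, smul_zero]
  | add x y hx hy ihx ihy => rw [Fadd, ihx, ihy, add_zero]
  | mul x y hx hy ihx ihy =>
      rw [Fmul, ihx, ihy, S3.act_zero', S3.act_zero', add_zero]

lemma tau123_tmul (a b c : A) :
    tau123 k A ((a ⊗ₜ[k] b) ⊗ₜ[k] c) = (c ⊗ₜ[k] a) ⊗ₜ[k] b := rfl

lemma tau132_tmul (a b c : A) :
    tau132 k A ((a ⊗ₜ[k] b) ⊗ₜ[k] c) = (b ⊗ₜ[k] c) ⊗ₜ[k] a := rfl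

lemma tau123_tau123 (x : (A ⊗[k] A) ⊗[k] A) :
    tau123 k A (tau123 k A x) = tau132 k A x := by
  have : (tau123 k A).comp (tau123 k A) = tau132 k A := by
    apply TensorProduct.ext
    apply TensorProduct.ext
    ext a b c
    rfl
  exact congrFun (congrArg DFunLike.coe this) x

lemma tau123_tau132 (x : (A ⊗[k] A) ⊗[k] A) :
    tau123 k A (tau132 k A x) = x := by
  have : (tau123 k A).comp (tau132 k A) = LinearMap.id := by
    apply TensorProduct.ext
    apply TensorProduct.ext
    ext a b c
    rfl
  exact congrFun (congrArg DFunLike.coe this) x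

lemma tau132_tau123 (x : (A ⊗[k] A) ⊗[k] A) :
    tau132 k A (tau123 k A x) = x := by
  have : (tau132 k A).comp (tau123 k A) = LinearMap.id := by
    apply TensorProduct.ext
    apply TensorProduct.ext
    ext a b c
    rfl
  exact congrFun (congrArg DFunLike.coe this) x

lemma trL_add_left (br : A →ₗ[k] A →ₗ[k] A ⊗[k] A) (x y : A) (d : A ⊗[k] A) :
    trL br (x + y) d = trL br x d + trL br y d := by
  unfold trL
  rw [map_add]
  rw [TensorProduct.map_add_left, LinearMap.add_apply]

lemma trL_smul_left (br : A →ₗ[k] A →ₗ[k] A ⊗[k] A) (r : k) (x : A) (d : A ⊗[k] A) :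
    trL br (r • x) d = r • trL br x d := by
  unfold trL
  rw [map_smul]
  rw [TensorProduct.map_smul_left, LinearMap.smul_apply]

/-- Linearity of the Jacobiator in its third slot: additivity. -/
lemma jac_add₃ (br : A →ₗ[k] A →ₗ[k] A ⊗[k] A) (a b x y : A) :
    jac br a b (x + y) = jac br a b x + jac br a b y := by
  simp only [jac, map_add, LinearMap.add_apply, trL_add_left]
  abel

/-- Linearity of the Jacobiator in its third slot: homogeneity. -/
lemma jac_smul₃ (br : A →ₗ[k] A →ₗ[k] A ⊗[k] A) (r : k) (a b x : A) :
    jac br a b (r • x) = r • jac br a b x := by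
  simp only [jac, map_smul, LinearMap.smul_apply, trL_smul_left, smul_add]

/-- Cyclic symmetry of the Jacobiator. -/
lemma jac_cyclic (br : A →ₗ[k] A →ₗ[k] A ⊗[k] A) (a b c : A) :
    jac br a b c = tau123 k A (jac br b c a) := by
  unfold jac
  rw [map_add, map_add, tau123_tau123, tau123_tau132]
  abel

end Aux

/-- Lemma `Jac2`: under the assumptions of Lemma `Jac`, a double bracket
taking constant values on a generating set is a double Poisson bracket. -/
theorem constant_double_bracket_is_poisson
    {k A : Type*} [Field k] [CharZero k] [Ring A] [Algebra k A]
    (S : BimodStr k A) (hS : S.SwapCommuting) (D : DoubleBracket S)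
    (S3 : BimodOn k A ((A ⊗[k] A) ⊗[k] A))
    (hder3 : ∀ a b c₁ c₂ : A, jac D.br a b (c₁ * c₂)
      = S3.act c₁ (jac D.br a b c₂) 1 + S3.act 1 (jac D.br a b c₁) c₂)
    {J : Type*} (gen : J → A) (hgen : Algebra.adjoin k (Set.range gen) = ⊤)
    (lam : J → J → k) (hanti : ∀ i j : J, lam i j = - lam j i)
    (hconst : ∀ i j : J, D.br (gen i) (gen j) = lam i j • ((1 : A) ⊗ₜ[k] (1 : A))) :
    ∀ a b c : A, jac D.br a b c = 0 := by
  -- `⟪a, 1⟫ = 0`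
  have hbr1 : ∀ a : A, D.br a 1 = 0 := by
    intro a
    have h := D.leibniz_right a 1 1
    rw [one_mul, S.act_one_one] at h
    exact right_eq_add.mp h
  -- trL of a constant vanishes
  have htrL : ∀ (x : A) (r : k), trL D.br x (r • ((1:A) ⊗ₜ[k] (1:A))) = 0 := by
    intro x r
    rw [map_smul]
    show r • ((D.br x 1) ⊗ₜ[k] (1:A)) = 0
    rw [hbr1, TensorProduct.zero_tmul, smul_zero]
  -- Jacobiator vanishes on triples of generators
  have step0 : ∀ i j l : J, jac D.br (gen i) (gen j) (gen l) = 0 := by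
    intro i j l
    unfold jac
    rw [hconst j l, hconst l i, hconst i j, htrL, htrL, htrL, map_zero, map_zero]
    simp
  -- first two slots generators, third arbitrary
  have step1 : ∀ (i j : J) (c : A), jac D.br (gen i) (gen j) c = 0 := by
    intro i j
    exact vanishing_ind S3 (jac D.br (gen i) (gen j))
      (jac_add₃ D.br _ _) (fun r x => jac_smul₃ D.br r _ _ x)
      (fun x y => hder3 _ _ x y) gen hgen (step0 i j)
  -- first slot generator, rest arbitrary
  have step2 : ∀ (j : J) (b c : A), jac D.br (gen j) b c = 0 := by
    intro j b
    refine vanishing_ind S3 (jac D.br (gen j) b)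
      (jac_add₃ D.br _ _) (fun r x => jac_smul₃ D.br r _ _ x)
      (fun x y => hder3 _ _ x y) gen hgen ?_
    intro i
    have : jac D.br (gen j) b (gen i) = tau132 k A (jac D.br (gen i) (gen j) b) := by
      rw [jac_cyclic D.br (gen i) (gen j) b, tau132_tau123]
    rw [this, step1, map_zero]
  -- general case
  intro a b c
  have key : ∀ x : A, jac D.br b c x = 0 := by
    refine vanishing_ind S3 (jac D.br b c)
      (jac_add₃ D.br _ _) (fun r x => jac_smul₃ D.br r _ _ x)
      (fun x y => hder3 _ _ x y) gen hgen ?_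
    intro j
    have : jac D.br b c (gen j) = tau132 k A (jac D.br (gen j) b c) := by
      rw [jac_cyclic D.br (gen j) b c, tau132_tau123]
    rw [this, step2, map_zero]
  have : jac D.br a b c = tau123 k A (jac D.br b c a) := jac_cyclic D.br a b c
  rw [this, key, map_zero]
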